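/- Let δ be a real number with 0 < δ ≤ (9 − √73)/4 and let q ∈ [0, 1]. Define D_v = ((1 + 2δ)/(3 − 2δ))·(1 − q) − q and D_w = (1 − q) − ((1 + 2δ)/(3 − 2δ))·q. Then: (1) if q ≤ δ then D_v ≥ 2δ and D_w ≥ 2δ; (2) if q ≥ 1 − δ then −D_v ≥ 2δ and −D_w ≥ 2δ; and (3) for every q ∈ [0, 1], |D_v| ≥ 2δ or |D_w| ≥ 2δ; specifically, if q ≥ 1/2 then −D_v ≥ 2δ, and if q ≤ 1/2 then D_w ≥ 2δ. -/
import Mathlib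


/-- Correctness of the PURIFY-gate gadget in the polymatrix-game reduction
for ε-Nash equilibria: with `D_v, D_w` the output players' utility gaps in
favour of 'zero', pure inputs force both gaps, and for every input at least
one of the two gaps has absolute value at least `2δ`. -/
theorem polymatrix_ne_purify_gadget (δ q : ℝ)
    (hδ0 : 0 < δ) (hδ1 : δ ≤ (9 - Real.sqrt 73) / 4)
    (hq : q ∈ Set.Icc (0:ℝ) 1) :
    (q ≤ δ →
      2 * δ ≤ ((1 + 2 * δ) / (3 - 2 * δ)) * (1 - q) - q ∧
      2 * δ ≤ (1 - q) - ((1 + 2 * δ) / (3 - 2 * δ)) * q) ∧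
    (1 - δ ≤ q →
      2 * δ ≤ -(((1 + 2 * δ) / (3 - 2 * δ)) * (1 - q) - q) ∧
      2 * δ ≤ -((1 - q) - ((1 + 2 * δ) / (3 - 2 * δ)) * q)) ∧
    (2 * δ ≤ |((1 + 2 * δ) / (3 - 2 * δ)) * (1 - q) - q| ∨
      2 * δ ≤ |(1 - q) - ((1 + 2 * δ) / (3 - 2 * δ)) * q|) ∧
    (1 / 2 ≤ q → 2 * δ ≤ -(((1 + 2 * δ) / (3 - 2 * δ)) * (1 - q) - q)) ∧
    (q ≤ 1 / 2 → 2 * δ ≤ (1 - q) - ((1 + 2 * δ) / (3 - 2 * δ)) * q) := by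
  obtain ⟨hq0, hq1⟩ := hq
  have hs : (17/2 : ℝ) ≤ Real.sqrt 73 := by
    rw [show (73:ℝ) = (17/2)^2 + 3/4 by norm_num]
    nlinarith [Real.sq_sqrt (by norm_num : ((17/2:ℝ))^2 + 3/4 ≥ 0),
      Real.sqrt_nonneg ((17/2:ℝ)^2 + 3/4)]
  have hδ8 : δ ≤ 1/8 := by linarith
  have hd : (0:ℝ) < 3 - 2 * δ := by linarith
  have hc : (1 + 2 * δ) / (3 - 2 * δ) * (3 - 2 * δ) = 1 + 2 * δ :=
    div_mul_cancel₀ _ (ne_of_gt hd)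
  have hhalf1 : 1 / 2 ≤ q → 2 * δ ≤ -(((1 + 2 * δ) / (3 - 2 * δ)) * (1 - q) - q) := by
    intro h
    have key : 0 ≤ (q * (3 - 2*δ) - (1 + 2*δ) * (1 - q) - 2*δ*(3 - 2*δ)) := by nlinarith
    calc (2:ℝ) * δ = 2 * δ + 0 := by ring
      _ ≤ 2 * δ + (q * (3 - 2*δ) - (1 + 2*δ) * (1 - q) - 2*δ*(3 - 2*δ)) / (3 - 2*δ) := by
          have := div_nonneg key (le_of_lt hd); linarith
      _ = -(((1 + 2 * δ) / (3 - 2 * δ)) * (1 - q) - q) := by field_simp <;> ring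
  have hhalf2 : q ≤ 1 / 2 → 2 * δ ≤ (1 - q) - ((1 + 2 * δ) / (3 - 2 * δ)) * q := by
    intro h
    have key : 0 ≤ ((1 - q) * (3 - 2*δ) - (1 + 2*δ) * q - 2*δ*(3 - 2*δ)) := by nlinarith
    calc (2:ℝ) * δ = 2 * δ + 0 := by ring
      _ ≤ 2 * δ + ((1 - q) * (3 - 2*δ) - (1 + 2*δ) * q - 2*δ*(3 - 2*δ)) / (3 - 2*δ) := by
          have := div_nonneg key (le_of_lt hd); linarith
      _ = (1 - q) - ((1 + 2 * δ) / (3 - 2 * δ)) * q := by field_simp <;> ring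
  refine ⟨?_, ?_, ?_, hhalf1, hhalf2⟩
  · intro h
    constructor
    · have key : 0 ≤ ((1 + 2*δ) * (1 - q) - q * (3 - 2*δ) - 2*δ*(3 - 2*δ)) := by nlinarith
      calc (2:ℝ) * δ = 2 * δ + 0 := by ring
        _ ≤ 2 * δ + ((1 + 2*δ) * (1 - q) - q * (3 - 2*δ) - 2*δ*(3 - 2*δ)) / (3 - 2*δ) := by
            have := div_nonneg key (le_of_lt hd); linarith
        _ = ((1 + 2 * δ) / (3 - 2 * δ)) * (1 - q) - q := by field_simp <;> ring
    · exact hhalf2 (by linarith)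
  · intro h
    constructor
    · exact hhalf1 (by linarith)
    · have key : 0 ≤ ((1 + 2*δ) * q - (1 - q) * (3 - 2*δ) - 2*δ*(3 - 2*δ)) := by nlinarith
      calc (2:ℝ) * δ = 2 * δ + 0 := by ring
        _ ≤ 2 * δ + ((1 + 2*δ) * q - (1 - q) * (3 - 2*δ) - 2*δ*(3 - 2*δ)) / (3 - 2*δ) := by
            have := div_nonneg key (le_of_lt hd); linarith
        _ = -((1 - q) - ((1 + 2 * δ) / (3 - 2 * δ)) * q) := by field_simp <;> ring
  · rcases le_total q (1/2) with h | h
    · exact Or.inr (le_trans (hhalf2 h) (le_abs_self _))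
    · exact Or.inl ((hhalf1 h).trans (neg_le_abs _))
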